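/- For every real δ, ∫_ℝ l·Q(δ,l) dl = (1/4)(8 + 4δ − e^{δ}(5 − 2δ)) if δ < 0, and (1/4)(4 − e^{−δ}) if δ ≥ 0, where Q(δ,l) is the density e^{−l}e^{δ}(l−δ) for l<0, δ≤l; e^{−l}e^{−(l−δ)}(1+2(l−δ)) for l≥0, δ≤l; e^{−l} for l≥0, δ>l; and 0 otherwise. -/

import Mathlib

open Real MeasureTheory

/-- The density of `min{X, δ+Y+Z}`. -/
noncomputable def Qden (δ l : ℝ) : ℝ :=
  if l < 0 then (if δ ≤ l then exp (-l) * exp δ * (l - δ) else 0)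
  else if δ ≤ l then exp (-l) * exp (-(l - δ)) * (1 + 2 * (l - δ))
  else exp (-l)

lemma tendQ1 (a b c : ℝ) :
    Filter.Tendsto (fun x : ℝ => (a * x ^ 2 + b * x + c) * exp (-x))
      Filter.atTop (nhds 0) := by
  have h2 := Real.tendsto_pow_mul_exp_neg_atTop_nhds_zero 2
  have h1 := Real.tendsto_pow_mul_exp_neg_atTop_nhds_zero 1
  have h0 := Real.tendsto_pow_mul_exp_neg_atTop_nhds_zero 0
  have h : Filter.Tendsto (fun x : ℝ =>
      a * (x ^ 2 * exp (-x)) + b * (x ^ 1 * exp (-x)) + c * (x ^ 0 * exp (-x)))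
      Filter.atTop (nhds 0) := by
    simpa using ((h2.const_mul a).add (h1.const_mul b)).add (h0.const_mul c)
  exact h.congr (fun x => by ring)

lemma tendQ2 (a b c : ℝ) :
    Filter.Tendsto (fun x : ℝ => (a * x ^ 2 + b * x + c) * exp (-(2 * x)))
      Filter.atTop (nhds 0) := by
  have h2x : Filter.Tendsto (fun x : ℝ => 2 * x) Filter.atTop Filter.atTop :=
    Filter.tendsto_id.const_mul_atTop two_pos
  have h := (tendQ1 (a / 4) (b / 2) c).comp h2x
  exact h.congr (fun x => by simp only [Function.comp_apply]; ring_nf)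

lemma integrableQ (a b c d : ℝ) :
    IntegrableOn (fun l : ℝ => (a * l ^ 2 + b * l + c) * exp (-(2 * l)))
      (Set.Ioi d) := by
  apply integrable_of_isBigO_exp_neg (b := 1) one_pos
  · fun_prop
  · have key : (fun x : ℝ => (a * x ^ 2 + b * x + c) * exp (-(2 * x)))
        = fun x => ((a * x ^ 2 + b * x + c) * exp (-x)) * exp (-x) := by
      funext x
      rw [mul_assoc, ← Real.exp_add]
      ring_nf
    rw [key]
    have h1 := (tendQ1 a b c).isBigO_one ℝ
    have h2 := h1.mul (Asymptotics.isBigO_refl (fun x : ℝ => exp (-x)) Filter.atTop)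
    exact h2.congr (fun x => rfl) (fun x => by rw [one_mul, neg_one_mul])

lemma IoiQ (a b c d : ℝ) :
    ∫ l in Set.Ioi d, (a * l ^ 2 + b * l + c) * exp (-(2 * l)) =
      exp (-(2 * d)) * (a / 2 * d ^ 2 + (a + b) / 2 * d + (2 * c + a + b) / 4) := by
  have hd : ∀ x ∈ Set.Ici d,
      HasDerivAt (fun l : ℝ =>
        -(exp (-(2 * l)) * (a / 2 * l ^ 2 + (a + b) / 2 * l + (2 * c + a + b) / 4)))
        ((a * x ^ 2 + b * x + c) * exp (-(2 * x))) x := by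
    intro x _
    have he : HasDerivAt (fun l : ℝ => exp (-(2 * l))) (exp (-(2 * x)) * (-(2 * 1))) x :=
      (((hasDerivAt_id x).const_mul 2).neg).exp
    have hp : HasDerivAt (fun l : ℝ => a / 2 * l ^ 2 + (a + b) / 2 * l + (2 * c + a + b) / 4)
        (a / 2 * (2 * x ^ 1) + (a + b) / 2 * 1) x := by
      exact (((hasDerivAt_pow 2 x).const_mul (a / 2)).add
        ((hasDerivAt_id x).const_mul ((a + b) / 2))).add_const _
    have h := (he.mul hp).neg
    refine h.congr_deriv ?_
    ring
  have htend : Filter.Tendsto (fun l : ℝ =>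
      -(exp (-(2 * l)) * (a / 2 * l ^ 2 + (a + b) / 2 * l + (2 * c + a + b) / 4)))
      Filter.atTop (nhds 0) := by
    have h := (tendQ2 (a / 2) ((a + b) / 2) ((2 * c + a + b) / 4)).neg
    simp only [neg_zero] at h
    exact h.congr (fun x => by ring)
  rw [integral_Ioi_of_hasDerivAt_of_tendsto' hd (integrableQ a b c d) htend]
  ring

lemma intervalQ (a b c u v : ℝ) :
    ∫ l in u..v, (a * l ^ 2 + b * l + c) * exp (-l) =
      -(exp (-v) * (a * v ^ 2 + (b + 2 * a) * v + (c + b + 2 * a)))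
      - -(exp (-u) * (a * u ^ 2 + (b + 2 * a) * u + (c + b + 2 * a))) := by
  apply intervalIntegral.integral_eq_sub_of_hasDerivAt
  · intro x _
    have he : HasDerivAt (fun l : ℝ => exp (-l)) (exp (-x) * (-1)) x :=
      ((hasDerivAt_id x).neg).exp
    have hp : HasDerivAt (fun l : ℝ => a * l ^ 2 + (b + 2 * a) * l + (c + b + 2 * a))
        (a * (2 * x ^ 1) + (b + 2 * a) * 1) x :=
      (((hasDerivAt_pow 2 x).const_mul a).add
        ((hasDerivAt_id x).const_mul (b + 2 * a))).add_const _
    have h := (he.mul hp).neg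
    refine h.congr_deriv ?_
    ring
  · apply Continuous.intervalIntegrable
    fun_prop

/-- The first moment of the density `Q(δ,·)`. -/
theorem integral_mul_Qden (δ : ℝ) :
    (δ < 0 → ∫ l : ℝ, l * Qden δ l = (1 / 4) * (8 + 4 * δ - exp δ * (5 - 2 * δ))) ∧
    (0 ≤ δ → ∫ l : ℝ, l * Qden δ l = (1 / 4) * (4 - exp (-δ))) := by
  constructor
  · -- case δ < 0
    intro h
    -- restrict to Ici δ
    have hind : (fun l : ℝ => l * Qden δ l)
        = Set.indicator (Set.Ici δ) (fun l : ℝ => l * Qden δ l) := by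
      funext l
      rw [Set.indicator_apply]
      split_ifs with hl
      · rfl
      · rw [Set.mem_Ici] at hl
        have hl0 : l < 0 := lt_of_lt_of_le (not_le.1 hl) h.le
        simp [Qden, hl0, hl]
    rw [hind, integral_indicator measurableSet_Ici, integral_Ici_eq_integral_Ioi]
    -- split at 0
    have hsplit : Set.Ioc δ 0 ∪ Set.Ioi (0:ℝ) = Set.Ioi δ := Set.Ioc_union_Ioi_eq_Ioi h.le
    -- the two nice integrands
    set f1 : ℝ → ℝ := fun l => exp δ * ((1 * l ^ 2 + (-δ) * l + 0) * exp (-l)) with hf1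
    set f2 : ℝ → ℝ := fun l => exp δ * ((2 * l ^ 2 + (1 - 2 * δ) * l + 0) * exp (-(2 * l)))
      with hf2
    have hae1 : (fun l : ℝ => l * Qden δ l) =ᵐ[volume.restrict (Set.Ioc δ 0)] f1 := by
      have h0 : ∀ᵐ (l : ℝ) ∂(volume.restrict (Set.Ioc δ 0)), l ≠ 0 := by
        apply ae_restrict_of_ae
        rw [ae_iff]
        simp only [ne_eq, not_not, Set.setOf_eq_eq_singleton]
        exact Real.volume_singleton
      filter_upwards [ae_restrict_mem measurableSet_Ioc, h0] with l hl hne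
      have hl0 : l < 0 := lt_of_le_of_ne hl.2 hne
      have hdl : δ ≤ l := hl.1.le
      simp only [Qden, if_pos hl0, if_pos hdl, hf1]
      ring
    have hae2 : Set.EqOn (fun l : ℝ => l * Qden δ l) f2 (Set.Ioi (0:ℝ)) := by
      intro l hl
      have hl0 : ¬ l < 0 := not_lt.2 (le_of_lt hl)
      have hdl : δ ≤ l := le_of_lt (lt_trans h hl)
      simp only [Qden, if_neg hl0, if_pos hdl, hf2]
      have hE : exp (-l) * exp (-(l - δ)) = exp δ * exp (-(2 * l)) := by
        rw [← Real.exp_add, ← Real.exp_add]; ring_nf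
      rw [hE]
      ring
    have hint1 : IntegrableOn (fun l : ℝ => l * Qden δ l) (Set.Ioc δ 0) := by
      refine (Integrable.congr ?_ hae1.symm)
      apply Integrable.const_mul
      exact (Continuous.integrableOn_Ioc (by fun_prop))
    have hint2 : IntegrableOn (fun l : ℝ => l * Qden δ l) (Set.Ioi (0:ℝ)) := by
      apply (IntegrableOn.congr_fun ?_ hae2.symm measurableSet_Ioi)
      exact (integrableQ 2 (1 - 2 * δ) 0 0).const_mul _
    rw [← hsplit, setIntegral_union Set.Ioc_disjoint_Ioi_same measurableSet_Ioi hint1 hint2]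
    have hI1 : ∫ l in Set.Ioc δ 0, l * Qden δ l = exp δ * ((δ - 2) + exp (-δ) * (δ + 2)) := by
      rw [integral_congr_ae hae1]
      rw [hf1, integral_const_mul, ← intervalIntegral.integral_of_le h.le, intervalQ]
      have hE : exp (-δ) * (1 * δ ^ 2 + (-δ + 2 * 1) * δ + (0 + -δ + 2 * 1))
          = exp (-δ) * (δ + 2) := by ring_nf
      simp only [neg_zero, Real.exp_zero]
      ring_nf
    have hI2 : ∫ l in Set.Ioi (0:ℝ), l * Qden δ l = exp δ * ((3 - 2 * δ) / 4) := by
      rw [setIntegral_congr_fun measurableSet_Ioi hae2, hf2, integral_const_mul, IoiQ]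
      norm_num
      ring
    rw [hI1, hI2]
    have hEE : exp δ * exp (-δ) = 1 := by rw [← Real.exp_add]; simp
    nlinarith [hEE]
  · -- case 0 ≤ δ
    intro h
    have hind : (fun l : ℝ => l * Qden δ l)
        = Set.indicator (Set.Ici (0:ℝ)) (fun l : ℝ => l * Qden δ l) := by
      funext l
      rw [Set.indicator_apply]
      split_ifs with hl
      · rfl
      · rw [Set.mem_Ici] at hl
        have hl0 : l < 0 := not_le.1 hl
        have hdl : ¬ δ ≤ l := not_le.2 (lt_of_lt_of_le hl0 h)
        simp [Qden, hl0, hdl]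
    rw [hind, integral_indicator measurableSet_Ici, integral_Ici_eq_integral_Ioi]
    have hsplit : Set.Ioc 0 δ ∪ Set.Ioi δ = Set.Ioi (0:ℝ) := Set.Ioc_union_Ioi_eq_Ioi h
    set f1 : ℝ → ℝ := fun l => (0 * l ^ 2 + 1 * l + 0) * exp (-l) with hf1
    set f2 : ℝ → ℝ := fun l => exp δ * ((2 * l ^ 2 + (1 - 2 * δ) * l + 0) * exp (-(2 * l)))
      with hf2
    have heq1 : Set.EqOn (fun l : ℝ => l * Qden δ l) f1 (Set.Ioc 0 δ) := by
      intro l hl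
      have hl0 : ¬ l < 0 := not_lt.2 hl.1.le
      simp only [Qden, if_neg hl0, hf1]
      by_cases hdl : δ ≤ l
      · have : l = δ := le_antisymm hl.2 hdl
        subst this
        simp only [if_pos hdl, sub_self, neg_zero, Real.exp_zero, mul_zero]
        ring
      · simp only [if_neg hdl]
        ring
    have heq2 : Set.EqOn (fun l : ℝ => l * Qden δ l) f2 (Set.Ioi δ) := by
      intro l hl
      have hl0 : ¬ l < 0 := not_lt.2 (le_trans h (le_of_lt hl))
      have hdl : δ ≤ l := le_of_lt hl
      simp only [Qden, if_neg hl0, if_pos hdl, hf2]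
      have hE : exp (-l) * exp (-(l - δ)) = exp δ * exp (-(2 * l)) := by
        rw [← Real.exp_add, ← Real.exp_add]; ring_nf
      rw [hE]
      ring
    have hint1 : IntegrableOn (fun l : ℝ => l * Qden δ l) (Set.Ioc 0 δ) := by
      apply (IntegrableOn.congr_fun ?_ heq1.symm measurableSet_Ioc)
      exact (Continuous.integrableOn_Ioc (by fun_prop))
    have hint2 : IntegrableOn (fun l : ℝ => l * Qden δ l) (Set.Ioi δ) := by
      apply (IntegrableOn.congr_fun ?_ heq2.symm measurableSet_Ioi)
      exact (integrableQ 2 (1 - 2 * δ) 0 δ).const_mul _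
    rw [← hsplit, setIntegral_union Set.Ioc_disjoint_Ioi_same measurableSet_Ioi hint1 hint2]
    have hI1 : ∫ l in Set.Ioc 0 δ, l * Qden δ l = 1 - exp (-δ) * (δ + 1) := by
      rw [setIntegral_congr_fun measurableSet_Ioc heq1, hf1,
        ← intervalIntegral.integral_of_le h, intervalQ]
      simp only [neg_zero, Real.exp_zero]
      ring_nf
    have hI2 : ∫ l in Set.Ioi δ, l * Qden δ l = exp (-δ) * (δ + 3 / 4) := by
      rw [setIntegral_congr_fun measurableSet_Ioi heq2, hf2, integral_const_mul, IoiQ]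
      have hE : exp δ * exp (-(2 * δ)) = exp (-δ) := by
        rw [← Real.exp_add]; ring_nf
      rw [← mul_assoc, hE]
      ring
    rw [hI1, hI2]
    ring
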